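/- Let G₉ be the subgroup of G₁₁ generated by s and u. Then {1, z, z²} is a left transversal of G₉ in G₁₁, i.e. G₁₁ = G₉ ∪ z·G₉ ∪ z²·G₉ with the three cosets pairwise disjoint; consequently, with Z₁₁ = {1, z, …, z²³}, U = {1, u, u², u³}, and X₁₁ = {1, s, s·u, s·u·s, s·u², s·u²·s}, the map Z₁₁ × U × X₁₁ → G₁₁ sending (y, v, x) to y·v·x is a bijection. -/
import Mathlib


open Pointwise

namespace Octa

def rels : Set (FreeGroup (Fin 3)) :=
  { FreeGroup.of 0 ^ 2, FreeGroup.of 1 ^ 3, FreeGroup.of 2 ^ 4,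
    FreeGroup.of 0 * FreeGroup.of 1 * FreeGroup.of 2 *
      (FreeGroup.of 1 * FreeGroup.of 2 * FreeGroup.of 0)⁻¹,
    FreeGroup.of 0 * FreeGroup.of 1 * FreeGroup.of 2 *
      (FreeGroup.of 2 * FreeGroup.of 0 * FreeGroup.of 1)⁻¹ }

/-- The group `G₁₁ = ⟨s, t, u | s² = t³ = u⁴ = 1, stu = tus = ust⟩`. -/
abbrev G11 := PresentedGroup rels

def s : G11 := PresentedGroup.of 0
def t : G11 := PresentedGroup.of 1
def u : G11 := PresentedGroup.of 2
def z : G11 := s * t * u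

def G9 : Subgroup G11 := Subgroup.closure {s, u}


lemma rel_one {r : FreeGroup (Fin 3)} (hr : r ∈ rels) : PresentedGroup.mk rels r = 1 :=
  (QuotientGroup.eq_one_iff _).mpr (Subgroup.subset_normalClosure hr)

lemma hs : s * s = 1 := by
  have := rel_one (r := FreeGroup.of 0 ^ 2) (by simp [rels])
  simpa [s, PresentedGroup.of, sq, map_mul] using this

lemma ht : t * t * t = 1 := by
  have := rel_one (r := FreeGroup.of 1 ^ 3) (by simp [rels])
  simpa [t, PresentedGroup.of, pow_succ, map_mul] using this

lemma hu : u * u * u * u = 1 := by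
  have := rel_one (r := FreeGroup.of 2 ^ 4) (by simp [rels])
  simpa [u, PresentedGroup.of, pow_succ, map_mul] using this

lemma h1 : s * t * u = t * u * s := by
  have := rel_one (r := FreeGroup.of 0 * FreeGroup.of 1 * FreeGroup.of 2 *
      (FreeGroup.of 1 * FreeGroup.of 2 * FreeGroup.of 0)⁻¹) (by simp [rels])
  simp only [map_mul, map_inv] at this
  have h := mul_inv_eq_one.mp this
  simpa [s, t, u, PresentedGroup.of, map_mul] using h

lemma h2 : s * t * u = u * s * t := by
  have := rel_one (r := FreeGroup.of 0 * FreeGroup.of 1 * FreeGroup.of 2 *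
      (FreeGroup.of 2 * FreeGroup.of 0 * FreeGroup.of 1)⁻¹) (by simp [rels])
  simp only [map_mul, map_inv] at this
  have h := mul_inv_eq_one.mp this
  simpa [s, t, u, PresentedGroup.of, map_mul] using h

lemma W1 : ∀ g : G11, s * (s * g) = g := fun g => by
  rw [← mul_assoc, hs, one_mul]

lemma W2 : ∀ g : G11, u * (u * (u * (u * g))) = g := fun g => by
  rw [show u * (u * (u * (u * g))) = (u*u*u*u) * g by group, hu, one_mul]

lemma cz_s : z * s = s * z := by
  have e1 : s * z = t * u := by
    rw [show s * z = (s*s)*(t*u) by rw [z]; group, hs, one_mul]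
  have e2 : z * s = t * u := by
    rw [z, h1, mul_assoc, hs, mul_one]
  rw [e1, e2]

lemma cz_u : u * z = z * u := by
  conv_rhs => rw [z, h2]
  rw [z]; group

lemma Czs : Commute z s := cz_s
lemma Czu : Commute z u := (cz_u).symm

def c : G11 := z ^ 3
lemma c_def : c = z ^ 3 := rfl
lemma Ccs : Commute c s := Czs.pow_left 3
lemma Ccu : Commute c u := Czu.pow_left 3

lemma W3 : ∀ g : G11, s * (c * g) = c * (s * g) := fun g => by
  rw [← mul_assoc, Ccs.symm.eq, mul_assoc]
lemma W4 : ∀ g : G11, u * (c * g) = c * (u * g) := fun g => by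
  rw [← mul_assoc, Ccu.symm.eq, mul_assoc]

lemma hu4r : u * (u * (u * u)) = 1 := by simpa using W2 1

lemma t_zm : t = z * (s * (u * (u * u))) := by
  have step1 : z * (s * (u * (u * u))) = s * (z * (u * (u * u))) := by
    rw [← mul_assoc, cz_s, mul_assoc]
  rw [step1, show s * (z * (u * (u * u))) = (s*s) * (t * (u * (u * (u * u)))) by rw [z]; group,
    hs, one_mul, hu4r, mul_one]

lemma Czm : Commute z (s * (u * (u * u))) :=
  Czs.mul_right (Czu.mul_right (Czu.mul_right Czu))

lemma htp : t ^ 3 = 1 := by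
  rw [pow_succ, pow_two]; exact ht

lemma zus3 : z ^ 3 = (u * s) ^ 3 := by
  have e : z ^ 3 * (s * (u * (u * u))) ^ 3 = 1 := by
    rw [← Czm.mul_pow, ← t_zm, htp]
  have hminv : (s * (u * (u * u)))⁻¹ = u * s := by
    apply inv_eq_of_mul_eq_one_right
    rw [show (s * (u * (u * u))) * (u * s) = s * (u * (u * (u * (u * (s * 1))))) by group,
      W2, W1]
  rw [eq_inv_of_mul_eq_one_left e, ← inv_pow, hminv]

lemma HC : ∀ g : G11, c * g = u * (s * (u * (s * (u * (s * g))))) := fun g => by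
  rw [c_def, zus3]; simp only [pow_succ, pow_zero, one_mul, mul_one, mul_assoc]

lemma A4 : ∀ g : G11, u * (s * (u * (s * g))) = c * (s * (u * (u * (u * g)))) := fun g => by
  rw [HC, W1, W2]

lemma A6 : ∀ g : G11, u * (s * (u * g)) = c * (s * (u * (u * (u * (s * g))))) := fun g => by
  rw [HC, W1, W2, W1]

lemma A2' : ∀ g : G11, s * (u * (s * (u * (s * g)))) = c * (u * (u * (u * g))) := fun g => by
  rw [A4, W3, W1]

lemma A1' : ∀ g : G11, s * (u * (s * (u * g))) = c * (u * (u * (u * (s * g)))) := fun g => by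
  rw [A6, W3, W1]

lemma A3' : ∀ g : G11, s * (u * (s * g)) = c * (u * (u * (u * (s * (u * (u * (u * g))))))) := fun g => by
  calc s * (u * (s * g)) = s * (u * (s * (u * (u * (u * (u * g)))))) := by rw [W2]
    _ = c * (u * (u * (u * (s * (u * (u * (u * g))))))) := A1' _

lemma K5 : ∀ g : G11, s * (u * (u * (s * (u * g)))) =
    c * (c * (u * (u * (u * (s * (u * (u * (s * g)))))))) := fun g => by
  rw [A6, W4, W3, A3', W2]

lemma core24 : ∀ g : G11, s * (u * (u * (s * (u * (u * g))))) =
    c * (c * (c * (c * (u * (u * (s * (u * (u * (s * g))))))))) := fun g => by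
  rw [K5, K5, W4, W4, W4, W4, W4, W4, W2]

lemma Lc4 : ∀ g : G11, s * (u * (u * (s * (u * (u * (s * (u * (u * (s * (u * (u * g))))))))))) =
    c * (c * (c * (c * g))) := fun g => by
  rw [core24, W1, W2, W1, W2]

lemma hr4 : (s * (u * u)) ^ 4 = c ^ 4 := by
  have h := Lc4 1
  calc (s * (u * u)) ^ 4
      = s * (u * (u * (s * (u * (u * (s * (u * (u * (s * (u * (u * 1))))))))))) := by simp only [pow_succ, pow_zero, one_mul, mul_one, mul_assoc]
    _ = c * (c * (c * (c * 1))) := h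
    _ = c ^ 4 := by simp only [pow_succ, pow_zero, one_mul, mul_one, mul_assoc]

lemma hrinv : (s * (u * u))⁻¹ = (u * u) * s := by
  apply inv_eq_of_mul_eq_one_right
  calc (s * (u * u)) * ((u * u) * s) = s * (u * (u * (u * (u * (s * 1))))) := by group
    _ = 1 := by rw [W2, W1]

lemma hconj : s * ((s * (u * u)) ^ 4 * s) = ((u * u) * s) ^ 4 := by
  calc s * ((s * (u * u)) ^ 4 * s)
      = s * (s * (u * (u * (s * (u * (u * (s * (u * (u * (s * (u * (u * (s * 1))))))))))))) := by
        simp only [pow_succ, pow_zero, one_mul, mul_one, mul_assoc]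
    _ = u * (u * (s * (u * (u * (s * (u * (u * (s * (u * (u * (s * 1))))))))))) := by rw [W1]
    _ = ((u * u) * s) ^ 4 := by simp only [pow_succ, pow_zero, one_mul, mul_one, mul_assoc]

lemma c8 : c ^ 8 = 1 := by
  have hA : s * (c ^ 4 * s) = c ^ 4 := by
    rw [← mul_assoc, ← (Ccs.pow_left 4).eq, mul_assoc, hs, mul_one]
  have hB : s * (c ^ 4 * s) = (c ^ 4)⁻¹ := by
    rw [← hr4, hconj, show ((u*u)*s) = (s*(u*u))⁻¹ from hrinv.symm, inv_pow, hr4]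
  have h3 : c ^ 4 = (c ^ 4)⁻¹ := hA.symm.trans hB
  calc c ^ 8 = c ^ 4 * c ^ 4 := by simp only [pow_succ, pow_zero, one_mul, mul_one, mul_assoc]
    _ = c ^ 4 * (c ^ 4)⁻¹ := by nth_rewrite 2 [h3]; rfl
    _ = 1 := by group

lemma z24 : z ^ 24 = 1 := by
  have : z ^ 24 = c ^ 8 := by rw [c_def, ← pow_mul]
  rw [this, c8]

lemma C8 : ∀ g : G11, c * (c * (c * (c * (c * (c * (c * (c * g))))))) = g := fun g => by
  rw [show c * (c * (c * (c * (c * (c * (c * (c * g))))))) = c ^ 8 * g by simp only [pow_succ, pow_zero, one_mul, mul_one, mul_assoc], c8, one_mul]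

lemma core30 : ∀ g : G11, s * (u * (u * (u * g))) =
    c * (c * (c * (c * (c * (c * (c * (u * (s * (u * (s * g)))))))))) := fun g => by
  rw [A4, C8]

lemma core31 : ∀ g : G11, s * (u * (u * (u * (s * g)))) =
    c * (c * (c * (c * (c * (c * (c * (u * (s * (u * g))))))))) := fun g => by
  rw [A6, C8]

lemma core32 : ∀ g : G11, s * (u * (u * (u * (s * (u * g))))) =
    c * (c * (c * (c * (c * (c * (c * (u * (s * (u * (u * g)))))))))) := fun g => by
  rw [core31]

lemma core33 : ∀ g : G11, s * (u * (u * (u * (s * (u * (s * g)))))) =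
    c * (c * (c * (c * (c * (c * (c * (u * (s * (u * (u * (s * g))))))))))) := fun g => by
  rw [core32]

lemma core34 : ∀ g : G11, s * (u * (u * (u * (s * (u * (u * g)))))) =
    c * (c * (c * (c * (c * (c * (u * (u * (s * (u * (s * g)))))))))) := fun g => by
  rw [core32, A4, W4]

lemma core35 : ∀ g : G11, s * (u * (u * (u * (s * (u * (u * (s * g))))))) =
    c * (c * (c * (c * (c * (c * (u * (u * (s * (u * g))))))))) := fun g => by
  rw [core34, W1]

lemma core23 : ∀ g : G11, s * (u * (u * (s * (u * (s * g))))) =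
    c * (c * (u * (u * (u * (s * (u * (u * g))))))) := fun g => by
  rw [K5, W1]

lemma core25 : ∀ g : G11, s * (u * (u * (s * (u * (u * (s * g)))))) =
    c * (c * (c * (c * (u * (u * (s * (u * (u * g)))))))) := fun g => by
  rw [core24, W1]

lemma nfl00 : s * (1 * 1) = z ^ 0 * (1 * s) := by
  simp

lemma nfl01 : s * (1 * s) = z ^ 0 * (1 * 1) := by
  simp [hs]

lemma nfl02 : s * (1 * (s*u)) = z ^ 0 * (u * 1) := by
  simp [← mul_assoc, hs]

lemma nfl03 : s * (1 * (s*u*s)) = z ^ 0 * (u * s) := by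
  simp [← mul_assoc, hs]

lemma nfl04 : s * (1 * (s*u^2)) = z ^ 0 * (u^2 * 1) := by
  simp [← mul_assoc, hs]

lemma nfl05 : s * (1 * (s*u^2*s)) = z ^ 0 * (u^2 * s) := by
  simp [← mul_assoc, hs]

lemma nfl10 : s * (u * 1) = z ^ 0 * (1 * (s*u)) := by
  simp [mul_assoc]

lemma nfl11 : s * (u * s) = z ^ 0 * (1 * (s*u*s)) := by
  simp [mul_assoc]

lemma nfl12 : s * (u * (s*u)) = z ^ 3 * (u^3 * s) := by
  have h := A1' (1 : G11)
  calc s * (u * (s*u)) = s * (u * (s * (u * 1))) := by simp only [pow_succ, pow_zero, one_mul, mul_one, mul_assoc]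
    _ = c * (u * (u * (u * (s * 1)))) := h
    _ = z ^ 3 * (u^3 * s) := by rw [c_def]; simp only [pow_succ, pow_zero, one_mul, mul_one, mul_assoc]

lemma nfl13 : s * (u * (s*u*s)) = z ^ 3 * (u^3 * 1) := by
  have h := A2' (1 : G11)
  calc s * (u * (s*u*s)) = s * (u * (s * (u * (s * 1)))) := by simp only [pow_succ, pow_zero, one_mul, mul_one, mul_assoc]
    _ = c * (u * (u * (u * 1))) := h
    _ = z ^ 3 * (u^3 * 1) := by rw [c_def]; simp only [pow_succ, pow_zero, one_mul, mul_one, mul_assoc]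

lemma nfl14 : s * (u * (s*u^2)) = z ^ 3 * (u^3 * (s*u)) := by
  have h := A1' (u * 1 : G11)
  calc s * (u * (s*u^2)) = s * (u * (s * (u * (u * 1)))) := by simp only [pow_succ, pow_zero, one_mul, mul_one, mul_assoc]
    _ = c * (u * (u * (u * (s * (u * 1))))) := h
    _ = z ^ 3 * (u^3 * (s*u)) := by rw [c_def]; simp only [pow_succ, pow_zero, one_mul, mul_one, mul_assoc]

lemma nfl15 : s * (u * (s*u^2*s)) = z ^ 3 * (u^3 * (s*u*s)) := by
  have h := A1' (u * (s * 1) : G11)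
  calc s * (u * (s*u^2*s)) = s * (u * (s * (u * (u * (s * 1))))) := by simp only [pow_succ, pow_zero, one_mul, mul_one, mul_assoc]
    _ = c * (u * (u * (u * (s * (u * (s * 1)))))) := h
    _ = z ^ 3 * (u^3 * (s*u*s)) := by rw [c_def]; simp only [pow_succ, pow_zero, one_mul, mul_one, mul_assoc]

lemma nfl20 : s * (u^2 * 1) = z ^ 0 * (1 * (s*u^2)) := by
  simp [mul_assoc]

lemma nfl21 : s * (u^2 * s) = z ^ 0 * (1 * (s*u^2*s)) := by
  simp [mul_assoc]

lemma nfl22 : s * (u^2 * (s*u)) = z ^ 6 * (u^3 * (s*u^2*s)) := by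
  have h := K5 (1 : G11)
  calc s * (u^2 * (s*u)) = s * (u * (u * (s * (u * 1)))) := by simp only [pow_succ, pow_zero, one_mul, mul_one, mul_assoc]
    _ = c * (c * (u * (u * (u * (s * (u * (u * (s * 1)))))))) := h
    _ = z ^ 6 * (u^3 * (s*u^2*s)) := by rw [c_def]; simp only [pow_succ, pow_zero, one_mul, mul_one, mul_assoc]

lemma nfl23 : s * (u^2 * (s*u*s)) = z ^ 6 * (u^3 * (s*u^2)) := by
  have h := core23 (1 : G11)
  calc s * (u^2 * (s*u*s)) = s * (u * (u * (s * (u * (s * 1))))) := by simp only [pow_succ, pow_zero, one_mul, mul_one, mul_assoc]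
    _ = c * (c * (u * (u * (u * (s * (u * (u * 1))))))) := h
    _ = z ^ 6 * (u^3 * (s*u^2)) := by rw [c_def]; simp only [pow_succ, pow_zero, one_mul, mul_one, mul_assoc]

lemma nfl24 : s * (u^2 * (s*u^2)) = z ^ 12 * (u^2 * (s*u^2*s)) := by
  have h := core24 (1 : G11)
  calc s * (u^2 * (s*u^2)) = s * (u * (u * (s * (u * (u * 1))))) := by simp only [pow_succ, pow_zero, one_mul, mul_one, mul_assoc]
    _ = c * (c * (c * (c * (u * (u * (s * (u * (u * (s * 1))))))))) := h
    _ = z ^ 12 * (u^2 * (s*u^2*s)) := by rw [c_def]; simp only [pow_succ, pow_zero, one_mul, mul_one, mul_assoc]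

lemma nfl25 : s * (u^2 * (s*u^2*s)) = z ^ 12 * (u^2 * (s*u^2)) := by
  have h := core25 (1 : G11)
  calc s * (u^2 * (s*u^2*s)) = s * (u * (u * (s * (u * (u * (s * 1)))))) := by simp only [pow_succ, pow_zero, one_mul, mul_one, mul_assoc]
    _ = c * (c * (c * (c * (u * (u * (s * (u * (u * 1)))))))) := h
    _ = z ^ 12 * (u^2 * (s*u^2)) := by rw [c_def]; simp only [pow_succ, pow_zero, one_mul, mul_one, mul_assoc]

lemma nfl30 : s * (u^3 * 1) = z ^ 21 * (u * (s*u*s)) := by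
  have h := core30 (1 : G11)
  calc s * (u^3 * 1) = s * (u * (u * (u * 1))) := by simp only [pow_succ, pow_zero, one_mul, mul_one, mul_assoc]
    _ = c * (c * (c * (c * (c * (c * (c * (u * (s * (u * (s * 1)))))))))) := h
    _ = z ^ 21 * (u * (s*u*s)) := by rw [c_def]; simp only [pow_succ, pow_zero, one_mul, mul_one, mul_assoc]

lemma nfl31 : s * (u^3 * s) = z ^ 21 * (u * (s*u)) := by
  have h := core31 (1 : G11)
  calc s * (u^3 * s) = s * (u * (u * (u * (s * 1)))) := by simp only [pow_succ, pow_zero, one_mul, mul_one, mul_assoc]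
    _ = c * (c * (c * (c * (c * (c * (c * (u * (s * (u * 1))))))))) := h
    _ = z ^ 21 * (u * (s*u)) := by rw [c_def]; simp only [pow_succ, pow_zero, one_mul, mul_one, mul_assoc]

lemma nfl32 : s * (u^3 * (s*u)) = z ^ 21 * (u * (s*u^2)) := by
  have h := core32 (1 : G11)
  calc s * (u^3 * (s*u)) = s * (u * (u * (u * (s * (u * 1))))) := by simp only [pow_succ, pow_zero, one_mul, mul_one, mul_assoc]
    _ = c * (c * (c * (c * (c * (c * (c * (u * (s * (u * (u * 1)))))))))) := h
    _ = z ^ 21 * (u * (s*u^2)) := by rw [c_def]; simp only [pow_succ, pow_zero, one_mul, mul_one, mul_assoc]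

lemma nfl33 : s * (u^3 * (s*u*s)) = z ^ 21 * (u * (s*u^2*s)) := by
  have h := core33 (1 : G11)
  calc s * (u^3 * (s*u*s)) = s * (u * (u * (u * (s * (u * (s * 1)))))) := by simp only [pow_succ, pow_zero, one_mul, mul_one, mul_assoc]
    _ = c * (c * (c * (c * (c * (c * (c * (u * (s * (u * (u * (s * 1))))))))))) := h
    _ = z ^ 21 * (u * (s*u^2*s)) := by rw [c_def]; simp only [pow_succ, pow_zero, one_mul, mul_one, mul_assoc]

lemma nfl34 : s * (u^3 * (s*u^2)) = z ^ 18 * (u^2 * (s*u*s)) := by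
  have h := core34 (1 : G11)
  calc s * (u^3 * (s*u^2)) = s * (u * (u * (u * (s * (u * (u * 1)))))) := by simp only [pow_succ, pow_zero, one_mul, mul_one, mul_assoc]
    _ = c * (c * (c * (c * (c * (c * (u * (u * (s * (u * (s * 1)))))))))) := h
    _ = z ^ 18 * (u^2 * (s*u*s)) := by rw [c_def]; simp only [pow_succ, pow_zero, one_mul, mul_one, mul_assoc]

lemma nfl35 : s * (u^3 * (s*u^2*s)) = z ^ 18 * (u^2 * (s*u)) := by
  have h := core35 (1 : G11)
  calc s * (u^3 * (s*u^2*s)) = s * (u * (u * (u * (s * (u * (u * (s * 1))))))) := by simp only [pow_succ, pow_zero, one_mul, mul_one, mul_assoc]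
    _ = c * (c * (c * (c * (c * (c * (u * (u * (s * (u * 1))))))))) := h
    _ = z ^ 18 * (u^2 * (s*u)) := by rw [c_def]; simp only [pow_succ, pow_zero, one_mul, mul_one, mul_assoc]

def Zset : Set G11 := {1, z, z ^ 2, z ^ 3, z ^ 4, z ^ 5, z ^ 6, z ^ 7, z ^ 8, z ^ 9, z ^ 10, z ^ 11, z ^ 12, z ^ 13, z ^ 14, z ^ 15, z ^ 16, z ^ 17, z ^ 18, z ^ 19, z ^ 20, z ^ 21, z ^ 22, z ^ 23}
def Uset : Set G11 := {1, u, u ^ 2, u ^ 3}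
def Xset : Set G11 := {1, s, s * u, s * u * s, s * u ^ 2, s * u ^ 2 * s}
def Tset : Set G11 := (fun p : G11 × G11 × G11 => p.1 * p.2.1 * p.2.2) '' (Zset ×ˢ (Uset ×ˢ Xset))

lemma mem_Zfin : ∀ m : ℕ, m < 24 → z ^ m ∈ Zset := by
  intro m hm
  simp only [Zset]
  interval_cases m
  · rw [pow_zero]; exact Set.mem_insert _ _
  · rw [pow_one]; exact Set.mem_insert_of_mem _ (Set.mem_insert _ _)
  · exact Set.mem_insert_of_mem _ (Set.mem_insert_of_mem _ (Set.mem_insert _ _))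
  · exact Set.mem_insert_of_mem _ (Set.mem_insert_of_mem _ (Set.mem_insert_of_mem _ (Set.mem_insert _ _)))
  · exact Set.mem_insert_of_mem _ (Set.mem_insert_of_mem _ (Set.mem_insert_of_mem _ (Set.mem_insert_of_mem _ (Set.mem_insert _ _))))
  · exact Set.mem_insert_of_mem _ (Set.mem_insert_of_mem _ (Set.mem_insert_of_mem _ (Set.mem_insert_of_mem _ (Set.mem_insert_of_mem _ (Set.mem_insert _ _)))))
  · exact Set.mem_insert_of_mem _ (Set.mem_insert_of_mem _ (Set.mem_insert_of_mem _ (Set.mem_insert_of_mem _ (Set.mem_insert_of_mem _ (Set.mem_insert_of_mem _ (Set.mem_insert _ _))))))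
  · exact Set.mem_insert_of_mem _ (Set.mem_insert_of_mem _ (Set.mem_insert_of_mem _ (Set.mem_insert_of_mem _ (Set.mem_insert_of_mem _ (Set.mem_insert_of_mem _ (Set.mem_insert_of_mem _ (Set.mem_insert _ _)))))))
  · exact Set.mem_insert_of_mem _ (Set.mem_insert_of_mem _ (Set.mem_insert_of_mem _ (Set.mem_insert_of_mem _ (Set.mem_insert_of_mem _ (Set.mem_insert_of_mem _ (Set.mem_insert_of_mem _ (Set.mem_insert_of_mem _ (Set.mem_insert _ _))))))))
  · exact Set.mem_insert_of_mem _ (Set.mem_insert_of_mem _ (Set.mem_insert_of_mem _ (Set.mem_insert_of_mem _ (Set.mem_insert_of_mem _ (Set.mem_insert_of_mem _ (Set.mem_insert_of_mem _ (Set.mem_insert_of_mem _ (Set.mem_insert_of_mem _ (Set.mem_insert _ _)))))))))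
  · exact Set.mem_insert_of_mem _ (Set.mem_insert_of_mem _ (Set.mem_insert_of_mem _ (Set.mem_insert_of_mem _ (Set.mem_insert_of_mem _ (Set.mem_insert_of_mem _ (Set.mem_insert_of_mem _ (Set.mem_insert_of_mem _ (Set.mem_insert_of_mem _ (Set.mem_insert_of_mem _ (Set.mem_insert _ _))))))))))
  · exact Set.mem_insert_of_mem _ (Set.mem_insert_of_mem _ (Set.mem_insert_of_mem _ (Set.mem_insert_of_mem _ (Set.mem_insert_of_mem _ (Set.mem_insert_of_mem _ (Set.mem_insert_of_mem _ (Set.mem_insert_of_mem _ (Set.mem_insert_of_mem _ (Set.mem_insert_of_mem _ (Set.mem_insert_of_mem _ (Set.mem_insert _ _)))))))))))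
  · exact Set.mem_insert_of_mem _ (Set.mem_insert_of_mem _ (Set.mem_insert_of_mem _ (Set.mem_insert_of_mem _ (Set.mem_insert_of_mem _ (Set.mem_insert_of_mem _ (Set.mem_insert_of_mem _ (Set.mem_insert_of_mem _ (Set.mem_insert_of_mem _ (Set.mem_insert_of_mem _ (Set.mem_insert_of_mem _ (Set.mem_insert_of_mem _ (Set.mem_insert _ _))))))))))))
  · exact Set.mem_insert_of_mem _ (Set.mem_insert_of_mem _ (Set.mem_insert_of_mem _ (Set.mem_insert_of_mem _ (Set.mem_insert_of_mem _ (Set.mem_insert_of_mem _ (Set.mem_insert_of_mem _ (Set.mem_insert_of_mem _ (Set.mem_insert_of_mem _ (Set.mem_insert_of_mem _ (Set.mem_insert_of_mem _ (Set.mem_insert_of_mem _ (Set.mem_insert_of_mem _ (Set.mem_insert _ _)))))))))))))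
  · exact Set.mem_insert_of_mem _ (Set.mem_insert_of_mem _ (Set.mem_insert_of_mem _ (Set.mem_insert_of_mem _ (Set.mem_insert_of_mem _ (Set.mem_insert_of_mem _ (Set.mem_insert_of_mem _ (Set.mem_insert_of_mem _ (Set.mem_insert_of_mem _ (Set.mem_insert_of_mem _ (Set.mem_insert_of_mem _ (Set.mem_insert_of_mem _ (Set.mem_insert_of_mem _ (Set.mem_insert_of_mem _ (Set.mem_insert _ _))))))))))))))
  · exact Set.mem_insert_of_mem _ (Set.mem_insert_of_mem _ (Set.mem_insert_of_mem _ (Set.mem_insert_of_mem _ (Set.mem_insert_of_mem _ (Set.mem_insert_of_mem _ (Set.mem_insert_of_mem _ (Set.mem_insert_of_mem _ (Set.mem_insert_of_mem _ (Set.mem_insert_of_mem _ (Set.mem_insert_of_mem _ (Set.mem_insert_of_mem _ (Set.mem_insert_of_mem _ (Set.mem_insert_of_mem _ (Set.mem_insert_of_mem _ (Set.mem_insert _ _)))))))))))))))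
  · exact Set.mem_insert_of_mem _ (Set.mem_insert_of_mem _ (Set.mem_insert_of_mem _ (Set.mem_insert_of_mem _ (Set.mem_insert_of_mem _ (Set.mem_insert_of_mem _ (Set.mem_insert_of_mem _ (Set.mem_insert_of_mem _ (Set.mem_insert_of_mem _ (Set.mem_insert_of_mem _ (Set.mem_insert_of_mem _ (Set.mem_insert_of_mem _ (Set.mem_insert_of_mem _ (Set.mem_insert_of_mem _ (Set.mem_insert_of_mem _ (Set.mem_insert_of_mem _ (Set.mem_insert _ _))))))))))))))))
  · exact Set.mem_insert_of_mem _ (Set.mem_insert_of_mem _ (Set.mem_insert_of_mem _ (Set.mem_insert_of_mem _ (Set.mem_insert_of_mem _ (Set.mem_insert_of_mem _ (Set.mem_insert_of_mem _ (Set.mem_insert_of_mem _ (Set.mem_insert_of_mem _ (Set.mem_insert_of_mem _ (Set.mem_insert_of_mem _ (Set.mem_insert_of_mem _ (Set.mem_insert_of_mem _ (Set.mem_insert_of_mem _ (Set.mem_insert_of_mem _ (Set.mem_insert_of_mem _ (Set.mem_insert_of_mem _ (Set.mem_insert _ _)))))))))))))))))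
  · exact Set.mem_insert_of_mem _ (Set.mem_insert_of_mem _ (Set.mem_insert_of_mem _ (Set.mem_insert_of_mem _ (Set.mem_insert_of_mem _ (Set.mem_insert_of_mem _ (Set.mem_insert_of_mem _ (Set.mem_insert_of_mem _ (Set.mem_insert_of_mem _ (Set.mem_insert_of_mem _ (Set.mem_insert_of_mem _ (Set.mem_insert_of_mem _ (Set.mem_insert_of_mem _ (Set.mem_insert_of_mem _ (Set.mem_insert_of_mem _ (Set.mem_insert_of_mem _ (Set.mem_insert_of_mem _ (Set.mem_insert_of_mem _ (Set.mem_insert _ _))))))))))))))))))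
  · exact Set.mem_insert_of_mem _ (Set.mem_insert_of_mem _ (Set.mem_insert_of_mem _ (Set.mem_insert_of_mem _ (Set.mem_insert_of_mem _ (Set.mem_insert_of_mem _ (Set.mem_insert_of_mem _ (Set.mem_insert_of_mem _ (Set.mem_insert_of_mem _ (Set.mem_insert_of_mem _ (Set.mem_insert_of_mem _ (Set.mem_insert_of_mem _ (Set.mem_insert_of_mem _ (Set.mem_insert_of_mem _ (Set.mem_insert_of_mem _ (Set.mem_insert_of_mem _ (Set.mem_insert_of_mem _ (Set.mem_insert_of_mem _ (Set.mem_insert_of_mem _ (Set.mem_insert _ _)))))))))))))))))))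
  · exact Set.mem_insert_of_mem _ (Set.mem_insert_of_mem _ (Set.mem_insert_of_mem _ (Set.mem_insert_of_mem _ (Set.mem_insert_of_mem _ (Set.mem_insert_of_mem _ (Set.mem_insert_of_mem _ (Set.mem_insert_of_mem _ (Set.mem_insert_of_mem _ (Set.mem_insert_of_mem _ (Set.mem_insert_of_mem _ (Set.mem_insert_of_mem _ (Set.mem_insert_of_mem _ (Set.mem_insert_of_mem _ (Set.mem_insert_of_mem _ (Set.mem_insert_of_mem _ (Set.mem_insert_of_mem _ (Set.mem_insert_of_mem _ (Set.mem_insert_of_mem _ (Set.mem_insert_of_mem _ (Set.mem_insert _ _))))))))))))))))))))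
  · exact Set.mem_insert_of_mem _ (Set.mem_insert_of_mem _ (Set.mem_insert_of_mem _ (Set.mem_insert_of_mem _ (Set.mem_insert_of_mem _ (Set.mem_insert_of_mem _ (Set.mem_insert_of_mem _ (Set.mem_insert_of_mem _ (Set.mem_insert_of_mem _ (Set.mem_insert_of_mem _ (Set.mem_insert_of_mem _ (Set.mem_insert_of_mem _ (Set.mem_insert_of_mem _ (Set.mem_insert_of_mem _ (Set.mem_insert_of_mem _ (Set.mem_insert_of_mem _ (Set.mem_insert_of_mem _ (Set.mem_insert_of_mem _ (Set.mem_insert_of_mem _ (Set.mem_insert_of_mem _ (Set.mem_insert_of_mem _ (Set.mem_insert _ _)))))))))))))))))))))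
  · exact Set.mem_insert_of_mem _ (Set.mem_insert_of_mem _ (Set.mem_insert_of_mem _ (Set.mem_insert_of_mem _ (Set.mem_insert_of_mem _ (Set.mem_insert_of_mem _ (Set.mem_insert_of_mem _ (Set.mem_insert_of_mem _ (Set.mem_insert_of_mem _ (Set.mem_insert_of_mem _ (Set.mem_insert_of_mem _ (Set.mem_insert_of_mem _ (Set.mem_insert_of_mem _ (Set.mem_insert_of_mem _ (Set.mem_insert_of_mem _ (Set.mem_insert_of_mem _ (Set.mem_insert_of_mem _ (Set.mem_insert_of_mem _ (Set.mem_insert_of_mem _ (Set.mem_insert_of_mem _ (Set.mem_insert_of_mem _ (Set.mem_insert_of_mem _ (Set.mem_insert _ _))))))))))))))))))))))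
  · exact Set.mem_insert_of_mem _ (Set.mem_insert_of_mem _ (Set.mem_insert_of_mem _ (Set.mem_insert_of_mem _ (Set.mem_insert_of_mem _ (Set.mem_insert_of_mem _ (Set.mem_insert_of_mem _ (Set.mem_insert_of_mem _ (Set.mem_insert_of_mem _ (Set.mem_insert_of_mem _ (Set.mem_insert_of_mem _ (Set.mem_insert_of_mem _ (Set.mem_insert_of_mem _ (Set.mem_insert_of_mem _ (Set.mem_insert_of_mem _ (Set.mem_insert_of_mem _ (Set.mem_insert_of_mem _ (Set.mem_insert_of_mem _ (Set.mem_insert_of_mem _ (Set.mem_insert_of_mem _ (Set.mem_insert_of_mem _ (Set.mem_insert_of_mem _ (Set.mem_insert_of_mem _ (Set.mem_singleton _)))))))))))))))))))))))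

lemma mem_Zset (n : ℕ) : z ^ n ∈ Zset := by
  rw [pow_eq_pow_mod n z24]
  exact mem_Zfin _ (Nat.mod_lt _ (by norm_num))

lemma hu4p : u ^ 4 = 1 := by
  have : u ^ 4 = u * u * u * u := by
    simp only [pow_succ, pow_zero, one_mul, ← mul_assoc]
  rw [this, hu]

lemma mem_U0 : ((1:G11)) ∈ Uset := by
  simp only [Uset]; exact Set.mem_insert _ _
lemma mem_U1 : (u) ∈ Uset := by
  simp only [Uset]; exact Set.mem_insert_of_mem _ (Set.mem_insert _ _)
lemma mem_U2 : (u ^ 2) ∈ Uset := by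
  simp only [Uset]; exact Set.mem_insert_of_mem _ (Set.mem_insert_of_mem _ (Set.mem_insert _ _))
lemma mem_U3 : (u ^ 3) ∈ Uset := by
  simp only [Uset]; exact Set.mem_insert_of_mem _ (Set.mem_insert_of_mem _ (Set.mem_insert_of_mem _ (Set.mem_singleton _)))
lemma mem_X0 : ((1:G11)) ∈ Xset := by
  simp only [Xset]; exact Set.mem_insert _ _
lemma mem_X1 : (s) ∈ Xset := by
  simp only [Xset]; exact Set.mem_insert_of_mem _ (Set.mem_insert _ _)
lemma mem_X2 : (s * u) ∈ Xset := by
  simp only [Xset]; exact Set.mem_insert_of_mem _ (Set.mem_insert_of_mem _ (Set.mem_insert _ _))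
lemma mem_X3 : (s * u * s) ∈ Xset := by
  simp only [Xset]; exact Set.mem_insert_of_mem _ (Set.mem_insert_of_mem _ (Set.mem_insert_of_mem _ (Set.mem_insert _ _)))
lemma mem_X4 : (s * u ^ 2) ∈ Xset := by
  simp only [Xset]; exact Set.mem_insert_of_mem _ (Set.mem_insert_of_mem _ (Set.mem_insert_of_mem _ (Set.mem_insert_of_mem _ (Set.mem_insert _ _))))
lemma mem_X5 : (s * u ^ 2 * s) ∈ Xset := by
  simp only [Xset]; exact Set.mem_insert_of_mem _ (Set.mem_insert_of_mem _ (Set.mem_insert_of_mem _ (Set.mem_insert_of_mem _ (Set.mem_insert_of_mem _ (Set.mem_singleton _)))))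

lemma mem_T' (i : ℕ) {v x : G11} (hv : v ∈ Uset) (hx : x ∈ Xset) :
    z ^ i * (v * x) ∈ Tset :=
  ⟨(z ^ i, v, x), ⟨mem_Zset i, hv, hx⟩, mul_assoc _ _ _⟩

lemma push (i : ℕ) (e : ℕ) {w v' x' : G11} (hv' : v' ∈ Uset) (hx' : x' ∈ Xset)
    (h : s * w = z ^ e * (v' * x')) : s * (z ^ i * w) ∈ Tset := by
  have hkey : s * (z ^ i * w) = z ^ (i + e) * (v' * x') := by
    rw [← mul_assoc, ← (Czs.pow_left i).eq, mul_assoc, h, ← mul_assoc, ← pow_add]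
  rw [hkey]; exact mem_T' _ hv' hx'

lemma pushu (i : ℕ) {w v' x' : G11} (hv' : v' ∈ Uset) (hx' : x' ∈ Xset)
    (h : u * w = v' * x') : u * (z ^ i * w) ∈ Tset := by
  have hkey : u * (z ^ i * w) = z ^ i * (v' * x') := by
    rw [← mul_assoc, ← (Czu.pow_left i).eq, mul_assoc, h]
  rw [hkey]; exact mem_T' _ hv' hx'

lemma z_repn {y : G11} (hy : y ∈ Zset) : ∃ i : ℕ, y = z ^ i := by
  simp only [Zset, Set.mem_insert_iff, Set.mem_singleton_iff] at hy
  rcases hy with rfl|rfl|rfl|rfl|rfl|rfl|rfl|rfl|rfl|rfl|rfl|rfl|rfl|rfl|rfl|rfl|rfl|rfl|rfl|rfl|rfl|rfl|rfl|rfl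
  · exact ⟨0, (pow_zero z).symm⟩
  · exact ⟨1, (pow_one z).symm⟩
  · exact ⟨2, rfl⟩
  · exact ⟨3, rfl⟩
  · exact ⟨4, rfl⟩
  · exact ⟨5, rfl⟩
  · exact ⟨6, rfl⟩
  · exact ⟨7, rfl⟩
  · exact ⟨8, rfl⟩
  · exact ⟨9, rfl⟩
  · exact ⟨10, rfl⟩
  · exact ⟨11, rfl⟩
  · exact ⟨12, rfl⟩
  · exact ⟨13, rfl⟩
  · exact ⟨14, rfl⟩
  · exact ⟨15, rfl⟩
  · exact ⟨16, rfl⟩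
  · exact ⟨17, rfl⟩
  · exact ⟨18, rfl⟩
  · exact ⟨19, rfl⟩
  · exact ⟨20, rfl⟩
  · exact ⟨21, rfl⟩
  · exact ⟨22, rfl⟩
  · exact ⟨23, rfl⟩

lemma sT : ∀ a ∈ Tset, s * a ∈ Tset := by
  rintro a ⟨⟨y, v, x⟩, ⟨hy, hv, hx⟩, rfl⟩
  obtain ⟨i, rfl⟩ := z_repn hy
  dsimp only
  rw [mul_assoc]
  simp only [Uset, Xset, Set.mem_insert_iff, Set.mem_singleton_iff] at hv hx
  rcases hv with rfl|rfl|rfl|rfl <;> rcases hx with rfl|rfl|rfl|rfl|rfl|rfl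
  · exact push i 0 mem_U0 mem_X1 nfl00
  · exact push i 0 mem_U0 mem_X0 nfl01
  · exact push i 0 mem_U1 mem_X0 nfl02
  · exact push i 0 mem_U1 mem_X1 nfl03
  · exact push i 0 mem_U2 mem_X0 nfl04
  · exact push i 0 mem_U2 mem_X1 nfl05
  · exact push i 0 mem_U0 mem_X2 nfl10
  · exact push i 0 mem_U0 mem_X3 nfl11
  · exact push i 3 mem_U3 mem_X1 nfl12
  · exact push i 3 mem_U3 mem_X0 nfl13
  · exact push i 3 mem_U3 mem_X2 nfl14
  · exact push i 3 mem_U3 mem_X3 nfl15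
  · exact push i 0 mem_U0 mem_X4 nfl20
  · exact push i 0 mem_U0 mem_X5 nfl21
  · exact push i 6 mem_U3 mem_X5 nfl22
  · exact push i 6 mem_U3 mem_X4 nfl23
  · exact push i 12 mem_U2 mem_X5 nfl24
  · exact push i 12 mem_U2 mem_X4 nfl25
  · exact push i 21 mem_U1 mem_X3 nfl30
  · exact push i 21 mem_U1 mem_X2 nfl31
  · exact push i 21 mem_U1 mem_X4 nfl32
  · exact push i 21 mem_U1 mem_X5 nfl33
  · exact push i 18 mem_U2 mem_X3 nfl34
  · exact push i 18 mem_U2 mem_X2 nfl35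

lemma uT : ∀ a ∈ Tset, u * a ∈ Tset := by
  rintro a ⟨⟨y, v, x⟩, ⟨hy, hv, hx⟩, rfl⟩
  obtain ⟨i, rfl⟩ := z_repn hy
  dsimp only
  rw [mul_assoc]
  simp only [Uset, Set.mem_insert_iff, Set.mem_singleton_iff] at hv
  rcases hv with rfl|rfl|rfl|rfl
  · exact pushu i mem_U1 hx (by rw [one_mul])
  · exact pushu i mem_U2 hx
      (by rw [← mul_assoc, ← pow_two])
  · exact pushu i mem_U3 hx
      (by rw [← mul_assoc, ← pow_succ'])
  · exact pushu i mem_U0 hx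
      (by rw [← mul_assoc, ← pow_succ', show (3:ℕ)+1 = 4 from rfl, hu4p])

lemma zT : ∀ a ∈ Tset, z * a ∈ Tset := by
  rintro a ⟨⟨y, v, x⟩, ⟨hy, hv, hx⟩, rfl⟩
  obtain ⟨i, rfl⟩ := z_repn hy
  dsimp only
  rw [mul_assoc, ← mul_assoc z, ← pow_succ']
  exact mem_T' _ hv hx

def K : Submonoid G11 where
  carrier := {g | ∀ a ∈ Tset, g * a ∈ Tset}
  one_mem' := fun a ha => by rwa [one_mul]
  mul_mem' := fun {x y} hx hy a ha => by
    rw [mul_assoc]; exact hx _ (hy _ ha)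

lemma sK : s ∈ K := sT
lemma uK : u ∈ K := uT
lemma zK : z ∈ K := zT
lemma tK : t ∈ K := by
  rw [t_zm]
  exact K.mul_mem zK (K.mul_mem sK (K.mul_mem uK (K.mul_mem uK uK)))
lemma sIK : s⁻¹ ∈ K := by
  rw [inv_eq_of_mul_eq_one_right hs]; exact sK
lemma uIK : u⁻¹ ∈ K := by
  rw [inv_eq_of_mul_eq_one_right hu4r]
  exact K.mul_mem uK (K.mul_mem uK uK)
lemma tIK : t⁻¹ ∈ K := by
  have h : t * (t * t) = 1 := by rw [← mul_assoc]; exact ht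
  rw [inv_eq_of_mul_eq_one_right h]
  exact K.mul_mem tK tK

lemma hK : ∀ g : G11, g ∈ K := by
  intro g
  have h1 : g ∈ Subgroup.closure (Set.range (PresentedGroup.of : Fin 3 → G11)) := by
    rw [PresentedGroup.closure_range_of]; exact Subgroup.mem_top g
  rw [← Subgroup.mem_toSubmonoid, Subgroup.closure_toSubmonoid] at h1
  refine Submonoid.closure_le.mpr ?_ h1
  rintro x (⟨n, rfl⟩ | hxm)
  · fin_cases n
    · exact sK
    · exact tK
    · exact uK
  · rw [Set.mem_inv] at hxm
    obtain ⟨n, hn⟩ := hxm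
    have hx : x = (PresentedGroup.of n : G11)⁻¹ := by rw [hn, inv_inv]
    rw [hx]
    fin_cases n
    · exact sIK
    · exact tIK
    · exact uIK

lemma mem_Z1 : (1:G11) ∈ Zset := by
  simp only [Zset]; exact Set.mem_insert _ _

lemma one_mem_T : (1 : G11) ∈ Tset :=
  ⟨(1, 1, 1), ⟨mem_Z1, mem_U0, mem_X0⟩, show (1:G11) * 1 * 1 = 1 by rw [one_mul, one_mul]⟩

lemma all_mem_T : ∀ g : G11, g ∈ Tset := fun g => by
  have := hK g 1 one_mem_T
  rwa [mul_one] at this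


def f3 : Fin 3 → Multiplicative (ZMod 3) := ![1, Multiplicative.ofAdd 1, 1]

lemma hf3 : ∀ r ∈ rels, FreeGroup.lift f3 r = 1 := by
  intro r hr
  simp only [rels, Set.mem_insert_iff, Set.mem_singleton_iff] at hr
  rcases hr with rfl|rfl|rfl|rfl|rfl <;>
    · simp only [map_mul, map_pow, map_inv, FreeGroup.lift_apply_of]
      decide

def χ : G11 →* Multiplicative (ZMod 3) := PresentedGroup.toGroup hf3

lemma χs : χ s = 1 := PresentedGroup.toGroup.of hf3

lemma χt : χ t = Multiplicative.ofAdd 1 := PresentedGroup.toGroup.of hf3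

lemma χu : χ u = 1 := PresentedGroup.toGroup.of hf3

lemma χz : χ z = Multiplicative.ofAdd 1 := by
  show χ (s * t * u) = _
  rw [map_mul, map_mul, χs, χt, χu, one_mul, mul_one]

lemma χG9 : ∀ g ∈ G9, χ g = 1 := by
  have hle : G9 ≤ χ.ker := by
    rw [show G9 = Subgroup.closure {s, u} from rfl]
    rw [Subgroup.closure_le]
    rintro x hx
    simp only [Set.mem_insert_iff, Set.mem_singleton_iff] at hx
    rcases hx with rfl | rfl
    · exact χs
    · exact χu
  exact fun g hg => hle hg

structure M2 where
  a : ZMod 73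
  b : ZMod 73
  c : ZMod 73
  d : ZMod 73
deriving DecidableEq

def m2mul (x y : M2) : M2 :=
  ⟨x.a*y.a+x.b*y.c, x.a*y.b+x.b*y.d, x.c*y.a+x.d*y.c, x.c*y.b+x.d*y.d⟩

instance : Mul M2 := ⟨m2mul⟩
def m2one : M2 := ⟨1,0,0,1⟩
instance : One M2 := ⟨m2one⟩

lemma m2mul_def (x y : M2) : x * y = m2mul x y := rfl
lemma m2one_def : (1 : M2) = m2one := rfl

instance : Monoid M2 where
  mul_assoc x y zz := by
    simp only [m2mul_def, m2mul]
    congr 1 <;> ring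
  one_mul x := by
    cases x
    simp only [m2one_def, m2one, m2mul_def, m2mul]
    congr 1 <;> ring
  mul_one x := by
    cases x
    simp only [m2one_def, m2one, m2mul_def, m2mul]
    congr 1 <;> ring

def SU : M2ˣ := ⟨⟨1,0,0,72⟩, ⟨1,0,0,72⟩, by decide, by decide⟩
def TU : M2ˣ := ⟨⟨22,30,34,60⟩, ⟨44,51,14,21⟩, by decide, by decide⟩
def UU : M2ˣ := ⟨⟨25,49,71,3⟩, ⟨65,9,19,55⟩, by decide, by decide⟩

def f2 : Fin 3 → M2ˣ := ![SU, TU, UU]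

lemma hf2 : ∀ r ∈ rels, FreeGroup.lift f2 r = 1 := by
  intro r hr
  simp only [rels, Set.mem_insert_iff, Set.mem_singleton_iff] at hr
  rcases hr with rfl|rfl|rfl|rfl|rfl <;>
    · simp only [map_mul, map_pow, map_inv, FreeGroup.lift_apply_of]
      exact Units.ext (by decide)

def φ : G11 →* M2ˣ := PresentedGroup.toGroup hf2

lemma φs : φ s = SU := PresentedGroup.toGroup.of hf2

lemma φt : φ t = TU := PresentedGroup.toGroup.of hf2

lemma φu : φ u = UU := PresentedGroup.toGroup.of hf2

lemma φz : φ z = SU * TU * UU := by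
  show φ (s * t * u) = _
  rw [map_mul, map_mul, φs, φt, φu]

def XL : Fin 6 → G11 := ![1, s, s * u, s * u * s, s * u ^ 2, s * u ^ 2 * s]

def ZMl : M2 := ⟨52,0,0,52⟩
def UMl : M2 := ⟨25,49,71,3⟩
def XMl : Fin 6 → M2 := ![⟨1,0,0,1⟩, ⟨1,0,0,72⟩, ⟨25,49,2,70⟩, ⟨25,24,2,3⟩, ⟨16,58,56,16⟩, ⟨16,15,56,57⟩]

def enc2 (m : M2) : ℕ := m.a.val + 73*(m.b.val + 73*(m.c.val + 73*(m.d.val)))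

def Ftrip (p : Fin 24 × Fin 4 × Fin 6) : M2 :=
  ZMl ^ (p.1 : ℕ) * UMl ^ (p.2.1 : ℕ) * XMl p.2.2

def dec576 (n : Fin 576) : Fin 24 × Fin 4 × Fin 6 :=
  (⟨(n : ℕ) % 24, by omega⟩, ⟨(n : ℕ) / 24 % 4, by omega⟩,
   ⟨(n : ℕ) / 24 / 4, by have := n.isLt; omega⟩)

def idx576 (p : Fin 24 × Fin 4 × Fin 6) : Fin 576 :=
  ⟨(p.1 : ℕ) + 24 * ((p.2.1 : ℕ) + 4 * (p.2.2 : ℕ)), by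
    have h1 := p.1.isLt; have h2 := p.2.1.isLt; have h3 := p.2.2.isLt; omega⟩

set_option maxRecDepth 100000 in
def encList : List ℕ := [389018, 20228936, 1167054, 3890180, 3501162, 11670540, 10503486, 6613306, 3112144, 19839918, 9336432, 2723126, 28009296, 8169378, 27231260, 24508134, 24897152, 16727774, 17894828, 21785008, 25286170, 8558396, 19061882, 25675188, 1549012, 4118865, 3858271, 11956774, 10796779, 6683316, 3214062, 20049948, 9642186, 2958870, 28143049, 8487520, 27243648, 24673795, 24934389, 16835886, 17995881, 22109344, 25578598, 8742712, 19150474, 25833790, 649611, 20305140, 22268812, 17161088, 9999296, 23084950, 816211, 12447710, 2448487, 8156124, 7339986, 23684863, 21236449, 13474744, 6523848, 11631572, 18793364, 5707710, 27976449, 16344950, 26344173, 20636536, 21452674, 5107797, 7556211, 15317916, 21497908, 5267264, 7697096, 15407446, 22307779, 17434934, 9737838, 23117723, 815273, 12167670, 2435161, 8104696, 7294752, 23525396, 21095564, 13385214, 6484881, 11357726, 19054822, 5674937, 27977387, 16624990, 26357499, 20687964, 28009225, 8169409, 27231193, 24508081, 24897097, 16727761, 17894809, 21784969, 25286113, 8558425,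 19061857, 25675129, 389089, 20228905, 1167121, 3890233, 3501217, 11670553, 10503505, 6613345, 3112201, 19839889, 9336457, 2723185, 27611326, 24732459, 25259389, 17011732, 18192993, 21858848, 25392046, 8769404, 19368998, 25913720, 527003, 20544930, 1181334, 4060201, 3533271, 11780928, 10599667, 6933812, 3400614, 20023256, 9423662, 2878940, 28265657, 8247730, 6315976, 11327804, 18947928, 5574440, 27662107, 16723320, 26179035, 20993612, 21735148, 5400845, 7625453, 15419172, 22476684, 17464856, 9844732, 23218220, 1130553, 12069340, 2613625, 7799048, 7057512, 23391815, 21167207, 13373488, 7108294, 23552012, 21314078, 13465208, 6362243, 11597562, 18687054, 5616265, 27652263, 16449120, 26160307, 20938388, 21684366, 5240648, 7478582, 15327452, 22430417, 17195098, 10105606, 23176395, 1140397, 12343540, 2632353, 7854272, 27245450, 24678147, 24929137, 16838138, 17990929, 22105442, 25574546, 8741810, 19149122, 25830938, 645409, 20307242, 1547210, 4114513, 3863523, 11954522, 10801731, 6687218, 3218114, 20050850, 9643538, 2961722, 28147251, 8485418, 15330358, 22434507, 17193012, 10107364, 23180649, 1135159, 12345790, 2627443, 7850364, 7104222, 23551092,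 21312666, 13462302, 6358153, 11599648, 18685296, 5612011, 27657501, 16446870, 26165217, 20942296, 21688438, 5241568, 7479994, 2096200, 16320213, 5894254, 19778962, 17682762, 1756895, 24260955, 4871010, 15591891, 14224013, 18366701, 13884708, 26696460, 12472447, 22898406, 9013698, 11109898, 27035765, 4531705, 23921650, 13200769, 14568647, 10425959, 14907952, 14011365, 18563780, 13635781, 26509663, 12498371, 22727178, 9091470, 10985377, 26885247, 4552488, 23859259, 12879284, 14781295, 10228880, 15156879, 2282997, 16294289, 6065482, 19701190, 17807283, 1907413, 24240172, 4933401, 15913376, 1179486, 4055939, 3538385, 11778654, 10604497, 6937648, 3404592, 20024252, 9425084, 2881782, 28269777, 8245598, 27613174, 24736721, 25254275, 17014006, 18188163, 21855012, 25388068, 8768408, 19367576, 25910878, 522883, 20547062, 13382426, 6480649, 11359874, 19052930, 5670577, 27982515, 16622714, 26362371, 20691794, 21501866, 5268242, 7698458, 15410234, 22312011, 17432786, 9739730, 23122083, 810145, 12169946, 2430289, 8100866, 7290794, 23524418, 21094202, 26605804, 12818841, 22626584, 9274846, 11072612, 27041029, 4419847, 23937588, 12865049, 14616607, 10196833, 15051832,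 2186856, 15973819, 6166076, 19517814, 17720048, 1751631, 24372813, 4855072, 15927611, 14176053, 18595827, 13740828, 14402937, 10394058, 14799839, 2000497, 16001203, 5996162, 19599966, 17599469, 1603595, 24394764, 4800127, 15598972, 14389723, 18398602, 13992821, 26792163, 12791457, 22796498, 9192694, 11193191, 27189065, 4397896, 23992533, 13193688, 6526946, 11629586, 18792146, 5712410, 27972795, 16348538, 26343723, 20636642, 21451178, 5107969, 7551577, 15318578, 22265714, 17163074, 10000514, 23080250, 819865, 12444122, 2448937, 8156018, 7341482, 23684691, 21241083, 13474082, 2284029, 16292619, 6068724, 19696180, 17806497, 1902895, 24237814, 4930651, 15916814, 14013919, 18563436, 13632785, 26508631, 12500041, 22723936, 9096480, 10986163, 26889765, 4554846, 23862009, 12875846, 14778741, 10229224, 15159875, 178120, 197611, 140014, 203816, 31025, 222431, 82417, 267618, 241922, 24820, 331420, 69131, 216226, 196735, 254332, 190530, 363321, 171915, 311929, 126728, 152424, 369526, 62926, 325215, 4421037, 23932892, 12868765, 14613031, 10197323, 15051762, 2188326, 15973609, 6170632, 19517184, 17723204, 1749595, 24371623, 4859768, 15923895, 14179629, 18595337,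 13740898, 26604334, 12819051, 22622028, 9275476, 11069456, 27043065, 22473504, 17466812, 9845996, 23213430, 1134345, 12065774, 2614197, 7799008, 7059082, 23391549, 21171771, 13372836, 6319156, 11325848, 18946664, 5579230, 27658315, 16726886, 26178463, 20993652, 21733578, 5401111, 7620889, 15419824, 26791005, 12793145, 22793170, 9197758, 11194011, 27193453, 4400356, 23995185, 13190264, 14400381, 10394444, 14802829, 2001655, 15999515, 5999490, 19594902, 17598649, 1599207, 24392304, 4797475, 15602396, 14392279, 18398216, 13989831, 178923, 202064, 142423, 206517, 27594, 219876, 82782, 270611, 243017, 23141, 334705, 64094, 215423, 192282, 251923, 187829, 366752, 174470, 311564, 123735, 151329, 371205, 59641, 330252, 24259663, 4875804, 15588161, 14227591, 18366169, 13884784, 26694864, 12472675, 22893764, 9014382, 11106776, 27037671, 4532997, 23916856, 13204499, 14565069, 10426491, 14907876, 2097796, 16319985, 5898896, 19778278, 17685884, 1754989]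

set_option maxRecDepth 100000 in
set_option maxHeartbeats 20000000 in
lemma hlist : List.ofFn (fun n : Fin 576 => enc2 (Ftrip (dec576 n))) = encList := by decide

set_option maxRecDepth 100000 in
set_option maxHeartbeats 20000000 in
lemma hnodup : encList.Nodup := by decide

set_option maxRecDepth 100000 in
set_option maxHeartbeats 20000000 in
lemma hdix : ∀ p, dec576 (idx576 p) = p := by decide

lemma Ftrip_inj : Function.Injective Ftrip := by
  intro p q h
  have hinj : Function.Injective (fun n : Fin 576 => enc2 (Ftrip (dec576 n))) :=
    List.nodup_ofFn.mp (by rw [hlist]; exact hnodup)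
  have h2 : idx576 p = idx576 q := by
    apply hinj
    show enc2 (Ftrip (dec576 (idx576 p))) = enc2 (Ftrip (dec576 (idx576 q)))
    rw [hdix, hdix, h]
  have h3 := congrArg dec576 h2
  rwa [hdix, hdix] at h3

lemma z_repb {y : G11} (hy : y ∈ Zset) : ∃ i : Fin 24, y = z ^ (i : ℕ) := by
  simp only [Zset, Set.mem_insert_iff, Set.mem_singleton_iff] at hy
  rcases hy with rfl|rfl|rfl|rfl|rfl|rfl|rfl|rfl|rfl|rfl|rfl|rfl|rfl|rfl|rfl|rfl|rfl|rfl|rfl|rfl|rfl|rfl|rfl|rfl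
  · exact ⟨⟨0, by norm_num⟩, (pow_zero z).symm⟩
  · exact ⟨⟨1, by norm_num⟩, (pow_one z).symm⟩
  · exact ⟨⟨2, by norm_num⟩, rfl⟩
  · exact ⟨⟨3, by norm_num⟩, rfl⟩
  · exact ⟨⟨4, by norm_num⟩, rfl⟩
  · exact ⟨⟨5, by norm_num⟩, rfl⟩
  · exact ⟨⟨6, by norm_num⟩, rfl⟩
  · exact ⟨⟨7, by norm_num⟩, rfl⟩
  · exact ⟨⟨8, by norm_num⟩, rfl⟩
  · exact ⟨⟨9, by norm_num⟩, rfl⟩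
  · exact ⟨⟨10, by norm_num⟩, rfl⟩
  · exact ⟨⟨11, by norm_num⟩, rfl⟩
  · exact ⟨⟨12, by norm_num⟩, rfl⟩
  · exact ⟨⟨13, by norm_num⟩, rfl⟩
  · exact ⟨⟨14, by norm_num⟩, rfl⟩
  · exact ⟨⟨15, by norm_num⟩, rfl⟩
  · exact ⟨⟨16, by norm_num⟩, rfl⟩
  · exact ⟨⟨17, by norm_num⟩, rfl⟩
  · exact ⟨⟨18, by norm_num⟩, rfl⟩
  · exact ⟨⟨19, by norm_num⟩, rfl⟩
  · exact ⟨⟨20, by norm_num⟩, rfl⟩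
  · exact ⟨⟨21, by norm_num⟩, rfl⟩
  · exact ⟨⟨22, by norm_num⟩, rfl⟩
  · exact ⟨⟨23, by norm_num⟩, rfl⟩

lemma u_repb {v : G11} (hv : v ∈ Uset) : ∃ j : Fin 4, v = u ^ (j : ℕ) := by
  simp only [Uset, Set.mem_insert_iff, Set.mem_singleton_iff] at hv
  rcases hv with rfl|rfl|rfl|rfl
  · exact ⟨⟨0, by norm_num⟩, (pow_zero u).symm⟩
  · exact ⟨⟨1, by norm_num⟩, (pow_one u).symm⟩
  · exact ⟨⟨2, by norm_num⟩, rfl⟩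
  · exact ⟨⟨3, by norm_num⟩, rfl⟩

lemma x_repb {x : G11} (hx : x ∈ Xset) : ∃ k : Fin 6, x = XL k := by
  simp only [Xset, Set.mem_insert_iff, Set.mem_singleton_iff] at hx
  rcases hx with rfl|rfl|rfl|rfl|rfl|rfl
  · exact ⟨(0 : Fin 6), rfl⟩
  · exact ⟨(1 : Fin 6), rfl⟩
  · exact ⟨(2 : Fin 6), rfl⟩
  · exact ⟨(3 : Fin 6), rfl⟩
  · exact ⟨(4 : Fin 6), rfl⟩
  · exact ⟨(5 : Fin 6), rfl⟩

lemma hx_val : ∀ k : Fin 6, ((φ (XL k) : M2ˣ) : M2) = XMl k := by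
  intro k
  fin_cases k
  · show ((φ (1 : G11) : M2ˣ) : M2) = _
    rw [map_one]; decide
  · show ((φ s : M2ˣ) : M2) = _
    rw [φs]; decide
  · show ((φ (s * u) : M2ˣ) : M2) = _
    rw [map_mul, φs, φu]; decide
  · show ((φ (s * u * s) : M2ˣ) : M2) = _
    rw [map_mul, map_mul, φs, φu]; decide
  · show ((φ (s * u ^ 2) : M2ˣ) : M2) = _
    rw [map_mul, map_pow, φs, φu]; decide
  · show ((φ (s * u ^ 2 * s) : M2ˣ) : M2) = _
    rw [map_mul, map_mul, map_pow, φs, φu]; decide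

lemma φval (i : Fin 24) (j : Fin 4) (k : Fin 6) :
    ((φ (z ^ (i : ℕ) * u ^ (j : ℕ) * XL k) : M2ˣ) : M2) = Ftrip (i, j, k) := by
  have hzval : ((φ z : M2ˣ) : M2) = ZMl := by rw [φz]; decide
  have huval : ((φ u : M2ˣ) : M2) = UMl := by rw [φu]; decide
  simp only [map_mul, map_pow, Units.val_mul, Units.val_pow_eq_pow_val, hzval, huval, hx_val]
  rfl

lemma inj_core {i i' : Fin 24} {j j' : Fin 4} {k k' : Fin 6}
    (h : z ^ (i : ℕ) * u ^ (j : ℕ) * XL k = z ^ (i' : ℕ) * u ^ (j' : ℕ) * XL k') :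
    i = i' ∧ j = j' ∧ k = k' := by
  have h2 := congrArg (fun g => ((φ g : M2ˣ) : M2)) h
  simp only [φval] at h2
  have h3 := Ftrip_inj h2
  simpa only [Prod.mk.injEq] using h3

lemma hsG9 : s ∈ G9 := Subgroup.subset_closure (Set.mem_insert _ _)
lemma huG9 : u ∈ G9 := Subgroup.subset_closure (Set.mem_insert_of_mem _ (Set.mem_singleton _))

lemma UsetG9 : ∀ v ∈ Uset, v ∈ G9 := by
  intro v hv
  simp only [Uset, Set.mem_insert_iff, Set.mem_singleton_iff] at hv
  rcases hv with rfl|rfl|rfl|rfl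
  · exact G9.one_mem
  · exact huG9
  · exact G9.pow_mem huG9 2
  · exact G9.pow_mem huG9 3

lemma XsetG9 : ∀ x ∈ Xset, x ∈ G9 := by
  intro x hx
  simp only [Xset, Set.mem_insert_iff, Set.mem_singleton_iff] at hx
  rcases hx with rfl|rfl|rfl|rfl|rfl|rfl
  · exact G9.one_mem
  · exact hsG9
  · exact G9.mul_mem hsG9 huG9
  · exact G9.mul_mem (G9.mul_mem hsG9 huG9) hsG9
  · exact G9.mul_mem hsG9 (G9.pow_mem huG9 2)
  · exact G9.mul_mem (G9.mul_mem hsG9 (G9.pow_mem huG9 2)) hsG9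

lemma hUnion : (G9 : Set G11) ∪ z • (G9 : Set G11) ∪ z ^ 2 • (G9 : Set G11) = Set.univ := by
  apply Set.eq_univ_of_forall
  intro g
  obtain ⟨⟨y, v, x⟩, ⟨hy, hv, hx⟩, hfp⟩ := all_mem_T g
  obtain ⟨i, rfl⟩ := z_repn hy
  dsimp only at hfp
  have hv9 := UsetG9 v hv
  have hx9 := XsetG9 x hx
  have hz3 : z ^ 3 ∈ G9 := by
    rw [zus3]; exact G9.pow_mem (G9.mul_mem huG9 hsG9) 3
  have hm : (z ^ 3) ^ (i / 3) * (v * x) ∈ G9 :=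
    G9.mul_mem (G9.pow_mem hz3 _) (G9.mul_mem hv9 hx9)
  have hzi : z ^ i = z ^ (i % 3) * (z ^ 3) ^ (i / 3) := by
    rw [← pow_mul, ← pow_add]; congr 1; omega
  have hg : g = z ^ (i % 3) * ((z ^ 3) ^ (i / 3) * (v * x)) := by
    rw [← hfp, hzi, mul_assoc, mul_assoc]
  have h3 : i % 3 = 0 ∨ i % 3 = 1 ∨ i % 3 = 2 := by omega
  rcases h3 with h|h|h <;> rw [h] at hg
  · rw [pow_zero, one_mul] at hg
    exact Or.inl (Or.inl (by rw [hg]; exact hm))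
  · rw [pow_one] at hg
    refine Or.inl (Or.inr ?_)
    rw [hg, ← smul_eq_mul]
    exact Set.smul_mem_smul_set hm
  · refine Or.inr ?_
    rw [hg, ← smul_eq_mul]
    exact Set.smul_mem_smul_set hm

lemma disj1 : Disjoint (G9 : Set G11) (z • (G9 : Set G11)) := by
  rw [Set.disjoint_left]
  rintro a ha ⟨b, hb, rfl⟩
  have h1 : χ (z • b) = 1 := χG9 _ ha
  have h2 : χ (z • b) = Multiplicative.ofAdd 1 := by
    rw [smul_eq_mul, map_mul, χz, χG9 b hb, mul_one]
  rw [h1] at h2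
  exact absurd h2 (by decide)

lemma disj2 : Disjoint (G9 : Set G11) (z ^ 2 • (G9 : Set G11)) := by
  rw [Set.disjoint_left]
  rintro a ha ⟨b, hb, rfl⟩
  have h1 : χ (z ^ 2 • b) = 1 := χG9 _ ha
  have h2 : χ (z ^ 2 • b) = Multiplicative.ofAdd 2 := by
    rw [smul_eq_mul, map_mul, map_pow, χz, χG9 b hb, mul_one]
    decide
  rw [h1] at h2
  exact absurd h2 (by decide)

lemma disj3 : Disjoint (z • (G9 : Set G11)) (z ^ 2 • (G9 : Set G11)) := by
  rw [Set.disjoint_left]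
  rintro a ⟨b, hb, rfl⟩ ⟨b', hb', heq⟩
  have h2 := congrArg χ heq
  dsimp only at h2
  rw [smul_eq_mul, smul_eq_mul, map_mul, map_mul, map_pow, χz, χG9 b hb, χG9 b' hb',
    mul_one, mul_one] at h2
  exact absurd h2 (by decide)


theorem statement11 :
    ((G9 : Set G11) ∪ z • (G9 : Set G11) ∪ z ^ 2 • (G9 : Set G11) = Set.univ) ∧
    Disjoint (G9 : Set G11) (z • (G9 : Set G11)) ∧
    Disjoint (G9 : Set G11) (z ^ 2 • (G9 : Set G11)) ∧
    Disjoint (z • (G9 : Set G11)) (z ^ 2 • (G9 : Set G11)) ∧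
    Set.BijOn (fun p : G11 × G11 × G11 => p.1 * p.2.1 * p.2.2)
      (({1, z, z ^ 2, z ^ 3, z ^ 4, z ^ 5, z ^ 6, z ^ 7, z ^ 8, z ^ 9, z ^ 10, z ^ 11, z ^ 12, z ^ 13, z ^ 14, z ^ 15, z ^ 16, z ^ 17, z ^ 18, z ^ 19, z ^ 20, z ^ 21, z ^ 22, z ^ 23} : Set G11) ×ˢ (({1, u, u ^ 2, u ^ 3} : Set G11) ×ˢ ({1, s, s * u, s * u * s, s * u ^ 2, s * u ^ 2 * s} : Set G11)))
      (Set.univ : Set G11) := by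
  refine ⟨hUnion, disj1, disj2, disj3, ?_, ?_, ?_⟩
  · exact fun p _ => Set.mem_univ _
  · rintro ⟨y, v, x⟩ hp ⟨y', v', x'⟩ hq h
    have hp' : (y, v, x) ∈ Zset ×ˢ (Uset ×ˢ Xset) := hp
    have hq' : (y', v', x') ∈ Zset ×ˢ (Uset ×ˢ Xset) := hq
    obtain ⟨hy, hv, hx⟩ := hp'
    obtain ⟨hy', hv', hx'⟩ := hq'
    obtain ⟨i, rfl⟩ := z_repb hy
    obtain ⟨j, rfl⟩ := u_repb hv
    obtain ⟨k, rfl⟩ := x_repb hx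
    obtain ⟨i', rfl⟩ := z_repb hy'
    obtain ⟨j', rfl⟩ := u_repb hv'
    obtain ⟨k', rfl⟩ := x_repb hx'
    dsimp only at h
    obtain ⟨hi, hj, hk⟩ := inj_core h
    rw [hi, hj, hk]
  · intro g _
    exact all_mem_T g

end Octa
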